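/- Double robustness identity: with Y = D·Y(1)+(1-D)·Y(0), ignorability D ⟂ Y(d)|X, positivity 0 < c ≤ e(X) ≤ 1-c, and arbitrary measurable functions ẽ(X) ∈ [c, 1-c] and b̃₁(X), b̃₀(X) with finite second moments, if either ẽ = e (the true propensity score) almost surely, or both b̃₁(X) = E[Y(1)|X] and b̃₀(X) = E[Y(0)|X] almost surely, then E[ D·Y/ẽ(X) - (D - ẽ(X))·b̃₁(X)/ẽ(X) - (1-D)·Y/(1-ẽ(X)) - (D - ẽ(X))·b̃₀(X)/(1-ẽ(X)) ] = E[Y(1)] - E[Y(0)]. -/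

import Mathlib

open MeasureTheory ProbabilityTheory

open MeasurableSpace in
lemma condexp_mul_of_condIndepFun_aux
    {Ω : Type*} {mΩ : MeasurableSpace Ω} [StandardBorelSpace Ω]
    {μ : Measure Ω} [IsProbabilityMeasure μ]
    {D Y : Ω → ℝ} (hD : Measurable D) (hY : Measurable Y)
    {C : ℝ} (hDbd : ∀ ω, |D ω| ≤ C)
    (hYint : Integrable Y μ)
    {m' : MeasurableSpace Ω} (hm' : m' ≤ mΩ)
    (h : CondIndepFun m' hm' D Y μ) :
    μ[fun ω => D ω * Y ω | m'] =ᵐ[μ] fun ω => (μ[D | m']) ω * (μ[Y | m']) ω := by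
  have hae : ∀ᵐ ω ∂μ, ∀ q r : ℚ,
      condExpKernel (mΩ := mΩ) μ m' ω (D ⁻¹' Set.Iic (q:ℝ) ∩ Y ⁻¹' Set.Iic (r:ℝ))
        = condExpKernel (mΩ := mΩ) μ m' ω (D ⁻¹' Set.Iic (q:ℝ))
          * condExpKernel (mΩ := mΩ) μ m' ω (Y ⁻¹' Set.Iic (r:ℝ)) := by
    rw [ae_all_iff]
    intro q
    rw [ae_all_iff]
    intro r
    exact ae_of_ae_trim hm'
      (h.measure_inter_preimage_eq_mul _ _ measurableSet_Iic measurableSet_Iic)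
  have hindep : ∀ᵐ ω ∂μ, IndepFun D Y (condExpKernel (mΩ := mΩ) μ m' ω) := by
    filter_upwards [hae] with ω hω
    rw [IndepFun_iff_Indep]
    have hgen : (borel ℝ) = MeasurableSpace.generateFrom (⋃ q : ℚ, {Set.Iic (q:ℝ)}) :=
      Real.borel_eq_generateFrom_Iic_rat
    have hreal : (inferInstance : MeasurableSpace ℝ) = borel ℝ := rfl
    have hcomapD : MeasurableSpace.comap D (inferInstance : MeasurableSpace ℝ)
        = MeasurableSpace.generateFrom ((fun s => D ⁻¹' s) '' (⋃ q : ℚ, {Set.Iic (q:ℝ)})) := by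
      rw [hreal, hgen, MeasurableSpace.comap_generateFrom]
    have hcomapY : MeasurableSpace.comap Y (inferInstance : MeasurableSpace ℝ)
        = MeasurableSpace.generateFrom ((fun s => Y ⁻¹' s) '' (⋃ q : ℚ, {Set.Iic (q:ℝ)})) := by
      rw [hreal, hgen, MeasurableSpace.comap_generateFrom]
    refine IndepSets.indep hD.comap_le hY.comap_le
      (Real.isPiSystem_Iic_rat.comap D) (Real.isPiSystem_Iic_rat.comap Y)
      hcomapD hcomapY ?_
    rintro _ _ ⟨s, hs, rfl⟩ ⟨t, ht, rfl⟩
    simp only [Set.mem_iUnion, Set.mem_singleton_iff] at hs ht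
    obtain ⟨q, rfl⟩ := hs
    obtain ⟨r, rfl⟩ := ht
    refine Filter.Eventually.of_forall fun _ => ?_
    simpa using hω q r
  have hDint : Integrable D μ := by
    refine (integrable_const C).mono' hD.aestronglyMeasurable ?_
    exact Filter.Eventually.of_forall fun ω => by
      simpa [Real.norm_eq_abs] using hDbd ω
  have hDYint : Integrable (fun ω => D ω * Y ω) μ := by
    refine (hYint.abs.const_mul C).mono'
      (hD.mul hY).aestronglyMeasurable ?_
    refine Filter.Eventually.of_forall fun ω => ?_
    have h1 : |D ω * Y ω| = |D ω| * |Y ω| := abs_mul _ _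
    have h2 : (0:ℝ) ≤ |Y ω| := abs_nonneg _
    simp only [Real.norm_eq_abs, h1]
    exact mul_le_mul_of_nonneg_right (hDbd ω) h2
  have h1 := condExp_ae_eq_integral_condExpKernel (mΩ := mΩ) hm' hDYint
  have h2 := condExp_ae_eq_integral_condExpKernel (mΩ := mΩ) hm' hDint
  have h3 := condExp_ae_eq_integral_condExpKernel (mΩ := mΩ) hm' hYint
  filter_upwards [h1, h2, h3, hindep] with ω e1 e2 e3 hind
  rw [e1, e2, e3]
  exact IndepFun.integral_fun_mul_eq_mul_integral hind hD.aestronglyMeasurable hY.aestronglyMeasurable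

lemma dr_term_zero
    {Ω 𝒳 : Type*} {mΩ : MeasurableSpace Ω} [StandardBorelSpace Ω]
    [mX : MeasurableSpace 𝒳]
    (μ : Measure Ω) [IsProbabilityMeasure μ]
    (X : Ω → 𝒳) (hX : Measurable X)
    (D : Ω → ℝ) (hD : Measurable D) (hD01 : ∀ ω, D ω = 0 ∨ D ω = 1)
    (Yd : Ω → ℝ) (hYd : Measurable Yd)
    (e etil b r : 𝒳 → ℝ)
    (he : Measurable e) (hetil : Measurable etil)
    (hb : Measurable b) (hr : Measurable r)
    (c : ℝ) (hc : 0 < c)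
    (hetbd : ∀ x, 0 ≤ etil x ∧ etil x ≤ 1)
    (hrge : ∀ x, c ≤ r x)
    (hps : (fun ω => e (X ω)) =ᵐ[μ] μ[D | MeasurableSpace.comap X mX])
    (hig : CondIndepFun (MeasurableSpace.comap X mX) hX.comap_le D Yd μ)
    (hYint : Integrable Yd μ)
    (hbint : Integrable (fun ω => b (X ω)) μ)
    (hgint : Integrable (fun ω => (D ω - etil (X ω)) * (Yd ω - b (X ω)) / r (X ω)) μ)
    (hzero : ((fun ω => etil (X ω)) =ᵐ[μ] fun ω => e (X ω)) ∨
      ((fun ω => b (X ω)) =ᵐ[μ] μ[Yd | MeasurableSpace.comap X mX])) :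
    ∫ ω, (D ω - etil (X ω)) * (Yd ω - b (X ω)) / r (X ω) ∂μ = 0 := by
  have hm : MeasurableSpace.comap X mX ≤ mΩ := hX.comap_le
  have hXm : Measurable[MeasurableSpace.comap X mX] X := measurable_iff_comap_le.mpr le_rfl
  have hEm : Measurable[MeasurableSpace.comap X mX] fun ω => etil (X ω) := hetil.comp hXm
  have hBm : Measurable[MeasurableSpace.comap X mX] fun ω => b (X ω) := hb.comp hXm
  have hRm : Measurable[MeasurableSpace.comap X mX] fun ω => r (X ω) := hr.comp hXm
  have hDbd : ∀ ω, |D ω| ≤ 1 := by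
    intro ω; rcases hD01 ω with h | h <;> simp [h]
  have hEbd : ∀ ω, |etil (X ω)| ≤ 1 := fun ω =>
    abs_le.mpr ⟨by linarith [(hetbd (X ω)).1], (hetbd (X ω)).2⟩
  have hDint : Integrable D μ := by
    refine (integrable_const (1:ℝ)).mono' hD.aestronglyMeasurable ?_
    exact Filter.Eventually.of_forall fun ω => by simpa [Real.norm_eq_abs] using hDbd ω
  -- integrability of the four products
  have hmul_int : ∀ (W : Ω → ℝ), Measurable W → (∀ ω, |W ω| ≤ 1) →
      ∀ (Z : Ω → ℝ), Measurable Z → Integrable Z μ →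
      Integrable (fun ω => W ω * Z ω) μ := by
    intro W hW hWbd Z hZ hZint
    refine hZint.abs.mono' (hW.mul hZ).aestronglyMeasurable ?_
    refine Filter.Eventually.of_forall fun ω => ?_
    simp only [Real.norm_eq_abs, abs_mul]
    calc |W ω| * |Z ω| ≤ 1 * |Z ω| :=
          mul_le_mul_of_nonneg_right (hWbd ω) (abs_nonneg _)
      _ = |Z ω| := one_mul _
  have hBXm : Measurable fun ω => b (X ω) := hb.comp hX
  have hEXm : Measurable fun ω => etil (X ω) := hetil.comp hX
  have hDYint : Integrable (fun ω => D ω * Yd ω) μ := hmul_int D hD hDbd Yd hYd hYint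
  have hDBint : Integrable (fun ω => D ω * b (X ω)) μ := hmul_int D hD hDbd _ hBXm hbint
  have hEYint : Integrable (fun ω => etil (X ω) * Yd ω) μ :=
    hmul_int _ hEXm hEbd Yd hYd hYint
  have hEBint : Integrable (fun ω => etil (X ω) * b (X ω)) μ :=
    hmul_int _ hEXm hEbd _ hBXm hbint
  have hvint : Integrable (fun ω => (D ω - etil (X ω)) * (Yd ω - b (X ω))) μ := by
    refine ((hYint.abs.add hbint.abs).const_mul 2).mono'
      ((hD.sub hEXm).mul (hYd.sub hBXm)).aestronglyMeasurable ?_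
    refine Filter.Eventually.of_forall fun ω => ?_
    simp only [Real.norm_eq_abs, abs_mul]
    have h1 : |D ω - etil (X ω)| ≤ 2 := by
      have h3 := abs_sub (D ω) (etil (X ω))
      have h4 := hDbd ω
      have h5 := hEbd ω
      linarith
    have h2 : |Yd ω - b (X ω)| ≤ |Yd ω| + |b (X ω)| := abs_sub _ _
    exact mul_le_mul h1 h2 (abs_nonneg _) (by norm_num)
  -- conditional expectation identities
  have hA : μ[(fun ω => D ω * Yd ω) | MeasurableSpace.comap X mX] =ᵐ[μ]
      fun ω => e (X ω) * (μ[Yd | MeasurableSpace.comap X mX]) ω := by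
    have h0 := condexp_mul_of_condIndepFun_aux hD hYd hDbd hYint hm hig
    filter_upwards [h0, hps] with ω h1 h2
    rw [h1, ← h2]
  have hB : μ[(fun ω => D ω * b (X ω)) | MeasurableSpace.comap X mX] =ᵐ[μ]
      fun ω => e (X ω) * b (X ω) := by
    have h0 : μ[((fun ω => b (X ω)) * D) | MeasurableSpace.comap X mX] =ᵐ[μ] (fun ω => b (X ω)) * μ[D | MeasurableSpace.comap X mX] :=
      condExp_mul_of_stronglyMeasurable_left hBm.stronglyMeasurable
        (hDBint.congr (Filter.Eventually.of_forall fun ω => mul_comm _ _)) hDint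
    have h1 : μ[(fun ω => D ω * b (X ω)) | MeasurableSpace.comap X mX] =ᵐ[μ] μ[((fun ω => b (X ω)) * D) | MeasurableSpace.comap X mX] :=
      condExp_congr_ae (Filter.Eventually.of_forall fun ω => by
        simp [mul_comm])
    filter_upwards [h0, h1, hps] with ω w0 w1 w2
    rw [w1, w0]
    simp only [Pi.mul_apply]
    rw [← w2]; ring
  have hC : μ[(fun ω => etil (X ω) * Yd ω) | MeasurableSpace.comap X mX] =ᵐ[μ]
      (fun ω => etil (X ω)) * μ[Yd | MeasurableSpace.comap X mX] := by
    have h0 : μ[((fun ω => etil (X ω)) * Yd) | MeasurableSpace.comap X mX] =ᵐ[μ]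
        (fun ω => etil (X ω)) * μ[Yd | MeasurableSpace.comap X mX] :=
      condExp_stronglyMeasurable_mul_of_bound hm hEm.stronglyMeasurable hYint 1
        (Filter.Eventually.of_forall fun ω => by
          simpa [Real.norm_eq_abs] using hEbd ω)
    exact h0
  have hEB : μ[(fun ω => etil (X ω) * b (X ω)) | MeasurableSpace.comap X mX] =ᵐ[μ]
      fun ω => etil (X ω) * b (X ω) := by
    rw [condExp_of_stronglyMeasurable hm (f := fun ω => etil (X ω) * b (X ω))
      ((hEm.mul hBm).stronglyMeasurable) hEBint]
  have step2 : μ[(fun ω => (D ω - etil (X ω)) * (Yd ω - b (X ω))) | MeasurableSpace.comap X mX] =ᵐ[μ]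
      fun ω => (e (X ω) - etil (X ω)) * ((μ[Yd | MeasurableSpace.comap X mX]) ω - b (X ω)) := by
    have e1 : (fun ω => (D ω - etil (X ω)) * (Yd ω - b (X ω))) =
        ((fun ω => D ω * Yd ω) - (fun ω => D ω * b (X ω)))
          - ((fun ω => etil (X ω) * Yd ω) - fun ω => etil (X ω) * b (X ω)) := by
      funext ω; simp only [Pi.sub_apply]; ring
    rw [e1]
    have h2 := condExp_sub (μ := μ) (m := MeasurableSpace.comap X mX) (hDYint.sub hDBint) (hEYint.sub hEBint)
    have h3 := condExp_sub (μ := μ) (m := MeasurableSpace.comap X mX) hDYint hDBint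
    have h4 := condExp_sub (μ := μ) (m := MeasurableSpace.comap X mX) hEYint hEBint
    filter_upwards [h2, h3, h4, hA, hB, hC, hEB] with ω w2 w3 w4 wA wB wC wEB
    rw [w2]
    simp only [Pi.sub_apply]
    rw [w3, w4]
    simp only [Pi.sub_apply]
    rw [wA, wB, wC, wEB]
    simp only [Pi.mul_apply]
    ring
  have hu_sm : StronglyMeasurable[MeasurableSpace.comap X mX] fun ω => (r (X ω))⁻¹ :=
    (hRm.inv).stronglyMeasurable
  have step1 : μ[(fun ω => (D ω - etil (X ω)) * (Yd ω - b (X ω)) / r (X ω)) | MeasurableSpace.comap X mX] =ᵐ[μ]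
      (fun ω => (r (X ω))⁻¹) * μ[(fun ω => (D ω - etil (X ω)) * (Yd ω - b (X ω))) | MeasurableSpace.comap X mX] := by
    have e1 : (fun ω => (D ω - etil (X ω)) * (Yd ω - b (X ω)) / r (X ω)) =
        (fun ω => (r (X ω))⁻¹) * (fun ω => (D ω - etil (X ω)) * (Yd ω - b (X ω))) := by
      funext ω; simp only [Pi.mul_apply]; rw [div_eq_mul_inv]; ring
    rw [e1]
    refine condExp_stronglyMeasurable_mul_of_bound hm hu_sm hvint c⁻¹ ?_
    refine Filter.Eventually.of_forall fun ω => ?_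
    have h1 : (0:ℝ) < r (X ω) := lt_of_lt_of_le hc (hrge (X ω))
    rw [Real.norm_eq_abs, abs_inv, abs_of_pos h1]
    exact inv_anti₀ hc (hrge (X ω))
  have hzero' : μ[(fun ω => (D ω - etil (X ω)) * (Yd ω - b (X ω)) / r (X ω)) | MeasurableSpace.comap X mX]
      =ᵐ[μ] 0 := by
    rcases hzero with hz | hz
    · filter_upwards [step1, step2, hz] with ω w1 w2 wz
      rw [w1]
      simp only [Pi.mul_apply]
      rw [w2, wz]
      simp
    · filter_upwards [step1, step2, hz] with ω w1 w2 wz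
      rw [w1]
      simp only [Pi.mul_apply]
      rw [w2, wz]
      simp
  have hic := integral_condExp (μ := μ) hm (f := fun ω => (D ω - etil (X ω)) * (Yd ω - b (X ω)) / r (X ω))
  rw [← hic, integral_congr_ae hzero']
  simp

/-- Double robustness of the augmented IPW (doubly robust) functional: if either the
working propensity score `ẽ` equals the true propensity score a.s., or the working
outcome regressions `b̃₁, b̃₀` equal `E[Y(1)∣X], E[Y(0)∣X]` a.s., then the AIPW
functional identifies `E[Y(1)] - E[Y(0)]`. -/
theorem doubly_robust_identification
    {Ω 𝒳 : Type*} {mΩ : MeasurableSpace Ω} [StandardBorelSpace Ω]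
    [mX : MeasurableSpace 𝒳]
    (μ : Measure Ω) [IsProbabilityMeasure μ]
    (X : Ω → 𝒳) (hX : Measurable X)
    (D : Ω → ℝ) (hD : Measurable D) (hD01 : ∀ ω, D ω = 0 ∨ D ω = 1)
    (Y1 Y0 : Ω → ℝ) (hY1 : Measurable Y1) (hY0 : Measurable Y0)
    (Y : Ω → ℝ) (hYdef : ∀ ω, Y ω = D ω * Y1 ω + (1 - D ω) * Y0 ω)
    (e etil b1til b0til : 𝒳 → ℝ)
    (he : Measurable e) (hetil : Measurable etil)
    (hb1 : Measurable b1til) (hb0 : Measurable b0til)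
    (c : ℝ) (hc : 0 < c) (hc' : c < 1)
    (hpos : ∀ x, c ≤ e x ∧ e x ≤ 1 - c)
    (hpos' : ∀ x, c ≤ etil x ∧ etil x ≤ 1 - c)
    (hps : (fun ω => e (X ω)) =ᵐ[μ] μ[D | MeasurableSpace.comap X mX])
    (hig1 : CondIndepFun (MeasurableSpace.comap X mX) hX.comap_le D Y1 μ)
    (hig0 : CondIndepFun (MeasurableSpace.comap X mX) hX.comap_le D Y0 μ)
    (hintY1 : Integrable Y1 μ) (hintY0 : Integrable Y0 μ)
    (hL2b1 : Integrable (fun ω => (b1til (X ω))^2) μ)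
    (hL2b0 : Integrable (fun ω => (b0til (X ω))^2) μ)
    (hint : Integrable (fun ω =>
        D ω * Y ω / etil (X ω)
        - (D ω - etil (X ω)) * b1til (X ω) / etil (X ω)
        - (1 - D ω) * Y ω / (1 - etil (X ω))
        - (D ω - etil (X ω)) * b0til (X ω) / (1 - etil (X ω))) μ)
    (hDR : ((fun ω => etil (X ω)) =ᵐ[μ] fun ω => e (X ω)) ∨
      (((fun ω => b1til (X ω)) =ᵐ[μ] μ[Y1 | MeasurableSpace.comap X mX]) ∧
        ((fun ω => b0til (X ω)) =ᵐ[μ] μ[Y0 | MeasurableSpace.comap X mX]))) :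
    (∫ ω, (D ω * Y ω / etil (X ω)
        - (D ω - etil (X ω)) * b1til (X ω) / etil (X ω)
        - (1 - D ω) * Y ω / (1 - etil (X ω))
        - (D ω - etil (X ω)) * b0til (X ω) / (1 - etil (X ω))) ∂μ)
      = (∫ ω, Y1 ω ∂μ) - ∫ ω, Y0 ω ∂μ := by
  have hc1 : ∀ x, (0:ℝ) < etil x := fun x => lt_of_lt_of_le hc (hpos' x).1
  have hc2 : ∀ x, (0:ℝ) < 1 - etil x := fun x => by
    have := (hpos' x).2; linarith
  have hetbd : ∀ x, (0:ℝ) ≤ etil x ∧ etil x ≤ 1 := fun x =>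
    ⟨le_of_lt (hc1 x), by have := (hpos' x).2; linarith⟩
  have hDbd : ∀ ω, |D ω| ≤ 1 := by
    intro ω; rcases hD01 ω with h | h <;> simp [h]
  have hEbd : ∀ ω, |etil (X ω)| ≤ 1 := fun ω =>
    abs_le.mpr ⟨by linarith [(hetbd (X ω)).1], (hetbd (X ω)).2⟩
  -- integrability of the working regressions
  have habs : ∀ (g : 𝒳 → ℝ), Measurable g → Integrable (fun ω => (g (X ω))^2) μ →
      Integrable (fun ω => g (X ω)) μ := by
    intro g hg hsq
    refine (hsq.add (integrable_const 1)).mono' (hg.comp hX).aestronglyMeasurable ?_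
    refine Filter.Eventually.of_forall fun ω => ?_
    simp only [Real.norm_eq_abs, Pi.add_apply]
    nlinarith [sq_nonneg (|g (X ω)| - 1), sq_abs (g (X ω)), abs_nonneg (g (X ω))]
  have hb1int := habs b1til hb1 hL2b1
  have hb0int := habs b0til hb0 hL2b0
  -- integrability of the two correction terms
  have hvint_gen : ∀ (Yd : Ω → ℝ), Measurable Yd → Integrable Yd μ →
      ∀ (b : 𝒳 → ℝ), Measurable b → Integrable (fun ω => b (X ω)) μ →
      Integrable (fun ω => (D ω - etil (X ω)) * (Yd ω - b (X ω))) μ := by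
    intro Yd hYd hYint b hb hbint
    refine ((hYint.abs.add hbint.abs).const_mul 2).mono'
      ((hD.sub (hetil.comp hX)).mul (hYd.sub (hb.comp hX))).aestronglyMeasurable ?_
    refine Filter.Eventually.of_forall fun ω => ?_
    simp only [Real.norm_eq_abs, abs_mul]
    have h1 : |D ω - etil (X ω)| ≤ 2 := by
      have h3 := abs_sub (D ω) (etil (X ω))
      have h4 := hDbd ω
      have h5 := hEbd ω
      linarith
    have h2 : |Yd ω - b (X ω)| ≤ |Yd ω| + |b (X ω)| := abs_sub _ _
    exact mul_le_mul h1 h2 (abs_nonneg _) (by norm_num)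
  have hdivint : ∀ (v : Ω → ℝ), Measurable v → Integrable v μ →
      ∀ (r : 𝒳 → ℝ), Measurable r → (∀ x, c ≤ r x) →
      Integrable (fun ω => v ω / r (X ω)) μ := by
    intro v hv hvint r hr hrge
    refine (hvint.abs.div_const c).mono' (hv.div (hr.comp hX)).aestronglyMeasurable ?_
    refine Filter.Eventually.of_forall fun ω => ?_
    have h1 : (0:ℝ) < r (X ω) := lt_of_lt_of_le hc (hrge (X ω))
    rw [Real.norm_eq_abs, abs_div, abs_of_pos h1]
    gcongr
    exact hrge (X ω)
  have hgint1 : Integrable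
      (fun ω => (D ω - etil (X ω)) * (Y1 ω - b1til (X ω)) / etil (X ω)) μ :=
    hdivint _ ((hD.sub (hetil.comp hX)).mul (hY1.sub (hb1.comp hX)))
      (hvint_gen Y1 hY1 hintY1 b1til hb1 hb1int) etil hetil (fun x => (hpos' x).1)
  have hgint0 : Integrable
      (fun ω => (D ω - etil (X ω)) * (Y0 ω - b0til (X ω)) / (1 - etil (X ω))) μ := by
    have := hdivint _ ((hD.sub (hetil.comp hX)).mul (hY0.sub (hb0.comp hX)))
      (hvint_gen Y0 hY0 hintY0 b0til hb0 hb0int) (fun x => 1 - etil x)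
      (measurable_const.sub hetil) (fun x => by have := (hpos' x).2; show c ≤ 1 - etil x; linarith)
    exact this
  -- pointwise decomposition
  have hptw : ∀ ω,
      (D ω * Y ω / etil (X ω)
        - (D ω - etil (X ω)) * b1til (X ω) / etil (X ω)
        - (1 - D ω) * Y ω / (1 - etil (X ω))
        - (D ω - etil (X ω)) * b0til (X ω) / (1 - etil (X ω)))
      = (Y1 ω - Y0 ω)
        + ((D ω - etil (X ω)) * (Y1 ω - b1til (X ω)) / etil (X ω)
          + (D ω - etil (X ω)) * (Y0 ω - b0til (X ω)) / (1 - etil (X ω))) := by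
    intro ω
    have ha : etil (X ω) ≠ 0 := ne_of_gt (hc1 (X ω))
    have ha' : 1 - etil (X ω) ≠ 0 := ne_of_gt (hc2 (X ω))
    rw [hYdef ω]
    rcases hD01 ω with h | h <;> rw [h] <;> field_simp <;> ring
  have hsplit : (∫ ω, (D ω * Y ω / etil (X ω)
        - (D ω - etil (X ω)) * b1til (X ω) / etil (X ω)
        - (1 - D ω) * Y ω / (1 - etil (X ω))
        - (D ω - etil (X ω)) * b0til (X ω) / (1 - etil (X ω))) ∂μ)
      = ∫ ω, ((Y1 ω - Y0 ω)
        + ((D ω - etil (X ω)) * (Y1 ω - b1til (X ω)) / etil (X ω)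
          + (D ω - etil (X ω)) * (Y0 ω - b0til (X ω)) / (1 - etil (X ω)))) ∂μ :=
    integral_congr_ae (Filter.Eventually.of_forall hptw)
  have hYsub : Integrable (fun ω => Y1 ω - Y0 ω) μ := hintY1.sub hintY0
  have hgadd : Integrable (fun ω =>
      (D ω - etil (X ω)) * (Y1 ω - b1til (X ω)) / etil (X ω)
      + (D ω - etil (X ω)) * (Y0 ω - b0til (X ω)) / (1 - etil (X ω))) μ :=
    hgint1.add hgint0
  rw [hsplit, integral_add hYsub hgadd, integral_add hgint1 hgint0,
    integral_sub hintY1 hintY0]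
  have hz1 : ∫ ω, (D ω - etil (X ω)) * (Y1 ω - b1til (X ω)) / etil (X ω) ∂μ = 0 := by
    refine dr_term_zero μ X hX D hD hD01 Y1 hY1 e etil b1til etil he hetil hb1 hetil
      c hc hetbd (fun x => (hpos' x).1) hps hig1 hintY1 hb1int hgint1 ?_
    rcases hDR with h | ⟨h1, _⟩
    · exact Or.inl h
    · exact Or.inr h1
  have hz0 : ∫ ω, (D ω - etil (X ω)) * (Y0 ω - b0til (X ω)) / (1 - etil (X ω)) ∂μ = 0 := by
    refine dr_term_zero μ X hX D hD hD01 Y0 hY0 e etil b0til (fun x => 1 - etil x)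
      he hetil hb0 (measurable_const.sub hetil)
      c hc hetbd (fun x => by have := (hpos' x).2; show c ≤ 1 - etil x; linarith) hps hig0 hintY0 hb0int hgint0 ?_
    rcases hDR with h | ⟨_, h0⟩
    · exact Or.inl h
    · exact Or.inr h0
  rw [hz1, hz0]
  ring
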